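/- Let 0 < r < 1 and let T be an invertible bounded operator on a Hilbert space H. Suppose Y ⊆ ℂ \ {0} contains σ(T) and for every rational function f with no poles in Y, ‖f(T)‖ ≤ sup_{y∈Y}|f(y)|. Then for the pair κ(T) = (T/√(1+r²), rT⁻¹/√(1+r²)) and every rational function g in two variables with no singularities on κ(Y), ‖g(κ(T))‖ ≤ sup{|g(w)| : w ∈ κ(Y)}; conversely, if κ(Y) is a von Neumann set for κ(T), then Y is one for T. -/

import Mathlib

open ContinuousLinearMap

/-- Evaluation of a two-variable polynomial on a commuting pair of operators. -/
noncomputable def mvEval2 {H : Type*} [NormedAddCommGroup H] [InnerProductSpace ℂ H]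
    (A B : H →L[ℂ] H) (p : MvPolynomial (Fin 2) ℂ) : H →L[ℂ] H :=
  (AddMonoidAlgebra.coeff p).sum fun m c => c • (A ^ (m 0) * B ^ (m 1))

section Aux

variable {H : Type*} [NormedAddCommGroup H] [InnerProductSpace ℂ H]

/-- one-variable polynomial `z^N * p(z/c, ρ z⁻¹ / c)` (after clearing denominators). -/
noncomputable def liftUp (ρ c : ℂ) (N : ℕ) (p : MvPolynomial (Fin 2) ℂ) : Polynomial ℂ :=
  (AddMonoidAlgebra.coeff p).sum fun m a => Polynomial.C (a * ρ ^ (m 1) * (c⁻¹) ^ (m 0 + m 1)) * Polynomial.X ^ (N + m 0 - m 1)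

lemma liftUp_eval (ρ c : ℂ) (N : ℕ) (p : MvPolynomial (Fin 2) ℂ) (z : ℂ)
    (hz : z ≠ 0) (hc : c ≠ 0) (hN : ∀ m ∈ p.support, m 1 ≤ N) :
    Polynomial.eval z (liftUp ρ c N p)
      = z ^ N * MvPolynomial.eval ![z / c, ρ * z⁻¹ / c] p := by
  rw [MvPolynomial.eval_eq']
  have hsum : liftUp ρ c N p = ∑ m ∈ p.support,
      Polynomial.C (MvPolynomial.coeff m p * ρ ^ (m 1) * (c⁻¹) ^ (m 0 + m 1))
        * Polynomial.X ^ (N + m 0 - m 1) := rfl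
  rw [hsum, Polynomial.eval_finset_sum, Finset.mul_sum]
  apply Finset.sum_congr rfl
  intro m hm
  have hb : m 1 ≤ N := hN m hm
  rw [Fin.prod_univ_two]
  simp only [Matrix.cons_val_zero, Matrix.cons_val_one, Matrix.head_cons]
  rw [Polynomial.eval_mul, Polynomial.eval_C, Polynomial.eval_pow, Polynomial.eval_X,
    pow_sub₀ z hz (hb.trans (Nat.le_add_right N (m 0)))]
  field_simp
  have hzm : z ^ m 1 * z⁻¹ ^ m 1 = 1 := by rw [← mul_pow, mul_inv_cancel₀ hz, one_pow]
  linear_combination (-(MvPolynomial.coeff m p * ρ ^ m 1 * c⁻¹ ^ m 1 * c⁻¹ ^ m 0 * z ^ m 0 * z ^ N)) * hzm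

lemma mvEval2_add (A B : H →L[ℂ] H) (x y : MvPolynomial (Fin 2) ℂ) :
    mvEval2 A B (x + y) = mvEval2 A B x + mvEval2 A B y := by
  unfold mvEval2; rw [AddMonoidAlgebra.coeff_add]; exact Finsupp.sum_add_index' (fun _ => by simp) (fun _ _ _ => by rw [add_smul])

noncomputable def mvEval2Hom (A B : H →L[ℂ] H) : MvPolynomial (Fin 2) ℂ →+ (H →L[ℂ] H) :=
  AddMonoidHom.mk' (mvEval2 A B) (mvEval2_add A B)

lemma mvEval2_monomial (A B : H →L[ℂ] H) (d : Fin 2 →₀ ℕ) (a : ℂ) :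
    mvEval2 A B (MvPolynomial.monomial d a) = a • (A ^ (d 0) * B ^ (d 1)) := by
  unfold mvEval2
  exact MvPolynomial.sum_monomial_eq (by simp)

lemma inv_pow_mul_pow (T Tinv : H →L[ℂ] H) (hT2 : Tinv * T = 1) :
    ∀ n : ℕ, Tinv ^ n * T ^ n = 1 := by
  intro n
  induction n with
  | zero => simp
  | succ n ih =>
    rw [pow_succ Tinv, pow_succ' T, mul_assoc, ← mul_assoc Tinv, hT2, one_mul, ih]

lemma liftUp_aeval (ρ c : ℂ) (N : ℕ) (p : MvPolynomial (Fin 2) ℂ)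
    (T Tinv : H →L[ℂ] H) (hT2 : Tinv * T = 1)
    (hN : ∀ m ∈ p.support, m 1 ≤ N) :
    mvEval2 (c⁻¹ • T) ((ρ / c) • Tinv) p * T ^ N = Polynomial.aeval T (liftUp ρ c N p) := by
  have hsum1 : mvEval2 (c⁻¹ • T) ((ρ / c) • Tinv) p
      = ∑ m ∈ p.support, (MvPolynomial.coeff m p) • ((c⁻¹ • T) ^ (m 0) * ((ρ / c) • Tinv) ^ (m 1)) := rfl
  have hsum2 : liftUp ρ c N p = ∑ m ∈ p.support,
      Polynomial.C (MvPolynomial.coeff m p * ρ ^ (m 1) * (c⁻¹) ^ (m 0 + m 1))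
        * Polynomial.X ^ (N + m 0 - m 1) := rfl
  rw [hsum1, hsum2, Finset.sum_mul, map_sum]
  apply Finset.sum_congr rfl
  intro m hm
  have hb : m 1 ≤ N := hN m hm
  rw [map_mul, Polynomial.aeval_C, Polynomial.aeval_X_pow, ← Algebra.smul_def]
  have hTT : T ^ (m 0) * Tinv ^ (m 1) * T ^ N = T ^ (N + m 0 - m 1) := by
    have h1 : Tinv ^ (m 1) * T ^ N = T ^ (N - m 1) := by
      have : T ^ N = T ^ (m 1) * T ^ (N - m 1) := by
        rw [← pow_add, Nat.add_sub_cancel' hb]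
      rw [this, ← mul_assoc, inv_pow_mul_pow T Tinv hT2, one_mul]
    rw [mul_assoc, h1, ← pow_add]
    congr 1
    omega
  have hTT' : T ^ (m 0) * (Tinv ^ (m 1) * T ^ N) = T ^ (N + m 0 - m 1) := by
    rw [← mul_assoc]; exact hTT
  simp only [smul_pow, smul_mul_assoc, mul_smul_comm, smul_smul, mul_assoc, hTT']
  congr 1
  rw [div_eq_mul_inv, mul_pow, pow_add]
  ring

/-- two-variable polynomial `p(c z₁)`. -/
noncomputable def liftDown (c : ℂ) (p : Polynomial ℂ) : MvPolynomial (Fin 2) ℂ :=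
  p.sum fun k a => MvPolynomial.monomial (Finsupp.single 0 k) (a * c ^ k)

lemma liftDown_eval (c : ℂ) (p : Polynomial ℂ) (f : Fin 2 → ℂ) :
    MvPolynomial.eval f (liftDown c p) = Polynomial.eval (c * f 0) p := by
  unfold liftDown
  rw [Polynomial.eval_eq_sum, Polynomial.sum_def, Polynomial.sum_def, map_sum]
  apply Finset.sum_congr rfl
  intro k _
  rw [MvPolynomial.eval_monomial, Finsupp.prod_single_index (by rw [pow_zero]), mul_pow]
  ring

lemma liftDown_mvEval2 (c : ℂ) (hc : c ≠ 0) (p : Polynomial ℂ) (T B : H →L[ℂ] H) :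
    mvEval2 (c⁻¹ • T) B (liftDown c p) = Polynomial.aeval T p := by
  have : mvEval2 (c⁻¹ • T) B (liftDown c p) = mvEval2Hom (c⁻¹ • T) B (liftDown c p) := rfl
  rw [this]
  unfold liftDown
  rw [Polynomial.sum_def, map_sum, Polynomial.aeval_def, Polynomial.eval₂_eq_sum,
    Polynomial.sum_def]
  apply Finset.sum_congr rfl
  intro k _
  have : mvEval2Hom (c⁻¹ • T) B (MvPolynomial.monomial (Finsupp.single 0 k) (p.coeff k * c ^ k))
      = (p.coeff k * c ^ k) • ((c⁻¹ • T) ^ ((Finsupp.single (0 : Fin 2) k) 0)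
          * B ^ ((Finsupp.single (0 : Fin 2) k) 1)) := mvEval2_monomial _ _ _ _
  rw [this]
  rw [Finsupp.single_eq_same, Finsupp.single_eq_of_ne' (by decide : (0 : Fin 2) ≠ 1)]
  rw [pow_zero, mul_one, smul_pow, smul_smul, ← Algebra.smul_def]
  congr 1
  rw [inv_pow, mul_assoc, mul_inv_cancel₀ (pow_ne_zero _ hc), mul_one]

lemma ringInverse_mul_unit {R : Type*} [Ring R] (a : R) (w : Rˣ) (ha : IsUnit a) :
    Ring.inverse (a * ↑w) = ↑w⁻¹ * Ring.inverse a := by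
  rw [← ha.unit_spec, ← Units.val_mul, Ring.inverse_unit, Ring.inverse_unit, mul_inv_rev,
    Units.val_mul]

end Aux

/-- For an invertible operator `T` and `Y ⊆ ℂ \ {0}`: `Y` is a von Neumann set for `T`
(i.e. `σ(T) ⊆ Y` and `‖f(T)‖ ≤ sup_Y |f|` for all rational `f` without poles in `Y`)
iff `κ(Y)` is a von Neumann set for `κ(T) = (T/√(1+r²), rT⁻¹/√(1+r²))`, where
`κ(z) = (z/√(1+r²), rz⁻¹/√(1+r²))` (Taylor spectrum of `κ(T)` being `κ(σ(T))`). -/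
theorem stmt18 {H : Type*} [NormedAddCommGroup H] [InnerProductSpace ℂ H] [CompleteSpace H]
    (r : ℝ) (hr0 : 0 < r) (hr1 : r < 1)
    (T Tinv : H →L[ℂ] H) (hT1 : T * Tinv = 1) (hT2 : Tinv * T = 1)
    (Y : Set ℂ) (hY : (0 : ℂ) ∉ Y)
    (κ : ℂ → ℂ × ℂ)
    (hκ : κ = fun z => (z / (Real.sqrt (1 + r ^ 2) : ℂ),
      (r : ℂ) * z⁻¹ / (Real.sqrt (1 + r ^ 2) : ℂ)))
    (T₁ T₂ : H →L[ℂ] H)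
    (hT₁ : T₁ = ((Real.sqrt (1 + r ^ 2) : ℂ))⁻¹ • T)
    (hT₂ : T₂ = ((r : ℂ) / (Real.sqrt (1 + r ^ 2) : ℂ)) • Tinv) :
    (spectrum ℂ T ⊆ Y
      ∧ ∀ p q : Polynomial ℂ, (∀ z ∈ Y, Polynomial.eval z q ≠ 0) →
          ENNReal.ofReal ‖Polynomial.aeval T p * Ring.inverse (Polynomial.aeval T q)‖
            ≤ ⨆ z ∈ Y, ENNReal.ofReal
                ‖Polynomial.eval z p / Polynomial.eval z q‖)
    ↔ (κ '' spectrum ℂ T ⊆ κ '' Y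
      ∧ ∀ p q : MvPolynomial (Fin 2) ℂ,
          (∀ w ∈ κ '' Y, MvPolynomial.eval ![w.1, w.2] q ≠ 0) →
          ENNReal.ofReal ‖mvEval2 T₁ T₂ p * Ring.inverse (mvEval2 T₁ T₂ q)‖
            ≤ ⨆ w ∈ κ '' Y, ENNReal.ofReal
                ‖MvPolynomial.eval ![w.1, w.2] p
                  / MvPolynomial.eval ![w.1, w.2] q‖) := by
  set c : ℂ := (Real.sqrt (1 + r ^ 2) : ℂ) with hcdef
  have hcpos : (0 : ℝ) < Real.sqrt (1 + r ^ 2) := Real.sqrt_pos.mpr (by positivity)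
  have hc : c ≠ 0 := by
    simpa [hcdef] using Complex.ofReal_ne_zero.mpr (ne_of_gt hcpos)
  have hzY : ∀ z ∈ Y, z ≠ 0 := fun z hz h => hY (h ▸ hz)
  -- the unit given by T
  let uT : (H →L[ℂ] H)ˣ := ⟨T, Tinv, hT1, hT2⟩
  have hκ1 : ∀ z : ℂ, (κ z).1 = z / c := by intro z; rw [hκ]
  have hκ2 : ∀ z : ℂ, (κ z).2 = (r : ℂ) * z⁻¹ / c := by intro z; rw [hκ]
  constructor
  · rintro ⟨hspec, hbound⟩
    constructor
    · exact Set.image_mono (f := κ) hspec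
    · intro p q hq
      by_cases hu : IsUnit (mvEval2 T₁ T₂ q)
      · set N : ℕ := (p.support ∪ q.support).sup (fun m => m 1) with hN
        have hNp : ∀ m ∈ p.support, m 1 ≤ N :=
          fun m hm => Finset.le_sup (f := fun m => m 1) (Finset.mem_union_left _ hm)
        have hNq : ∀ m ∈ q.support, m 1 ≤ N :=
          fun m hm => Finset.le_sup (f := fun m => m 1) (Finset.mem_union_right _ hm)
        set P := liftUp (r : ℂ) c N p with hP
        set Q := liftUp (r : ℂ) c N q with hQ
        have hQz : ∀ z ∈ Y, Polynomial.eval z Q ≠ 0 := by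
          intro z hz
          rw [hQ, liftUp_eval _ _ _ _ _ (hzY z hz) hc hNq]
          refine mul_ne_zero (pow_ne_zero _ (hzY z hz)) ?_
          have := hq (κ z) (Set.mem_image_of_mem κ hz)
          rwa [hκ1, hκ2] at this
        have key := hbound P Q hQz
        -- operator identities
        have hPop : mvEval2 T₁ T₂ p * T ^ N = Polynomial.aeval T P := by
          rw [hP, hT₁, hT₂]; exact liftUp_aeval _ _ _ _ _ _ hT2 hNp
        have hQop : mvEval2 T₁ T₂ q * T ^ N = Polynomial.aeval T Q := by
          rw [hQ, hT₁, hT₂]; exact liftUp_aeval _ _ _ _ _ _ hT2 hNq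
        set w : (H →L[ℂ] H)ˣ := uT ^ N with hw
        have hTN : (T : H →L[ℂ] H) ^ N = (w : H →L[ℂ] H) := by
          rw [hw, Units.val_pow_eq_pow_val]
        have hop : Polynomial.aeval T P * Ring.inverse (Polynomial.aeval T Q)
            = mvEval2 T₁ T₂ p * Ring.inverse (mvEval2 T₁ T₂ q) := by
          rw [← hPop, ← hQop, hTN, ringInverse_mul_unit _ _ hu, mul_assoc,
            ← mul_assoc (w : H →L[ℂ] H), Units.mul_inv, one_mul]
        rw [← hop]
        refine key.trans (le_of_eq ?_)
        rw [iSup_image]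
        refine iSup_congr fun z => iSup_congr fun hz => ?_
        congr 1
        rw [hκ1, hκ2, hP, hQ, liftUp_eval _ _ _ _ _ (hzY z hz) hc hNp,
          liftUp_eval _ _ _ _ _ (hzY z hz) hc hNq,
          mul_div_mul_left _ _ (pow_ne_zero N (hzY z hz))]
      · rw [Ring.inverse_non_unit _ hu, mul_zero, norm_zero, ENNReal.ofReal_zero]
        exact zero_le
  · rintro ⟨hspec, hbound⟩
    constructor
    · intro z hz
      obtain ⟨y, hy, hyz⟩ := hspec (Set.mem_image_of_mem κ hz)
      have h1 : y / c = z / c := by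
        have := congrArg Prod.fst hyz
        rwa [hκ1, hκ1] at this
      have : y = z := by
        field_simp at h1
        exact h1
      rwa [← this]
    · intro p q hq
      set p' := liftDown c p with hp'
      set q' := liftDown c q with hq'
      have hq'z : ∀ w ∈ κ '' Y, MvPolynomial.eval ![w.1, w.2] q' ≠ 0 := by
        rintro w ⟨z, hz, rfl⟩
        rw [hq', liftDown_eval]
        have : c * (![(κ z).1, (κ z).2] 0) = z := by
          simp only [Matrix.cons_val_zero]
          rw [hκ1]
          field_simp
        rw [this]
        exact hq z hz
      have key := hbound p' q' hq'z
      have hpop : mvEval2 T₁ T₂ p' = Polynomial.aeval T p := by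
        rw [hp', hT₁]; exact liftDown_mvEval2 _ hc _ _ _
      have hqop : mvEval2 T₁ T₂ q' = Polynomial.aeval T q := by
        rw [hq', hT₁]; exact liftDown_mvEval2 _ hc _ _ _
      rw [hpop, hqop] at key
      refine key.trans (le_of_eq ?_)
      rw [iSup_image]
      refine iSup_congr fun z => iSup_congr fun hz => ?_
      congr 1
      have hcz : ∀ pp : Polynomial ℂ,
          MvPolynomial.eval ![(κ z).1, (κ z).2] (liftDown c pp) = Polynomial.eval z pp := by
        intro pp
        rw [liftDown_eval]
        congr 1
        simp only [Matrix.cons_val_zero]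
        rw [hκ1]
        field_simp
      rw [hp', hq', hcz, hcz]
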